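/- (Repeated visits to the bottom state.) Let m ≥ 2 be an integer and let (X_t)_{t≥1} be a stochastic process on a probability space, adapted to a filtration (F_t), taking values in {1, …, m}, such that for constants c₁ ∈ (0,1) and c₂ ∈ (0,1) and for every t ≥ 1, almost surely Pr[X_{t+1} ≤ c₁·X_t | F_t] ≥ 1 − X_t^{−c₂} on the event {X_t > 1} (after each visit to the state 1 the process may move to an arbitrary state in {1, …, m}). Then there exists a constant K (depending only on c₁ and c₂) such that for every positive integer k and all sufficiently large m, with probability at least 1 − k·m^{−4} the process visits the state 1 at least k times within the first K·k·(log m)² steps. -/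

import Mathlib

open MeasureTheory Set

namespace RVaux

set_option linter.unusedSectionVars false



variable {Ω : Type} [inst : MeasurableSpace Ω]

/-- No visit to state 1 during the time window `[s, s+n]`. -/
def NV (X : ℕ → Ω → ℕ) (s n : ℕ) : Set Ω :=
  ⋂ u ∈ Finset.Icc s (s + n), {ω | X u ω ≠ 1}

lemma mem_NV {X : ℕ → Ω → ℕ} {s n : ℕ} {ω : Ω} :
    ω ∈ NV X s n ↔ ∀ u, s ≤ u → u ≤ s + n → X u ω ≠ 1 := by
  simp [NV, Finset.mem_Icc, and_imp]

lemma step_bound (μ : Measure Ω) [IsProbabilityMeasure μ] (ℱ : Filtration ℕ inst)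
    (X : ℕ → Ω → ℕ) (c₁ c₂ : ℝ)
    (hadapt : ∀ t : ℕ, 1 ≤ t → Measurable[ℱ t] (X t))
    (hdrift : ∀ t : ℕ, 1 ≤ t → ∀ᵐ ω ∂μ, 1 < X t ω →
      1 - (X t ω : ℝ) ^ (-c₂) ≤
        (μ[Set.indicator {ω' : Ω | (X (t + 1) ω' : ℝ) ≤ c₁ * (X t ω' : ℝ)}
            (fun _ => (1 : ℝ)) | ℱ t]) ω)
    (s x : ℕ) (hs : 1 ≤ s) (hx : 2 ≤ x)
    (A : Set Ω) (hA : MeasurableSet[ℱ s] A) (hAx : ∀ ω ∈ A, X s ω = x) :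
    μ (A \ {ω | (X (s + 1) ω : ℝ) ≤ c₁ * (X s ω : ℝ)}) ≤
      ENNReal.ofReal ((x : ℝ) ^ (-c₂)) * μ A := by
  set S : Set Ω := {ω | (X (s + 1) ω : ℝ) ≤ c₁ * (X s ω : ℝ)} with hSdef
  have hXs : Measurable (X s) := (hadapt s hs).mono (ℱ.le s) le_rfl
  have hXs1 : Measurable (X (s + 1)) :=
    (hadapt (s + 1) (by omega)).mono (ℱ.le (s + 1)) le_rfl
  have hS : MeasurableSet S := by
    apply measurableSet_le
    · exact measurable_from_top.comp hXs1
    · exact measurable_const.mul (measurable_from_top.comp hXs)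
  have hAm : MeasurableSet A := ℱ.le s A hA
  have hint : Integrable (S.indicator fun _ => (1 : ℝ)) μ :=
    (integrable_const 1).indicator hS
  have h2 : ∫ ω in A, (μ[S.indicator (fun _ => (1 : ℝ)) | ℱ s]) ω ∂μ
      = ∫ ω in A, S.indicator (fun _ => (1 : ℝ)) ω ∂μ :=
    setIntegral_condExp (ℱ.le s) hint hA
  have h1 : ∫ ω in A, S.indicator (fun _ => (1 : ℝ)) ω ∂μ = (μ (A ∩ S)).toReal := by
    rw [setIntegral_indicator hS]
    simp
    rfl
  have h3 : (1 - (x : ℝ) ^ (-c₂)) * (μ A).toReal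
      ≤ ∫ ω in A, (μ[S.indicator (fun _ => (1 : ℝ)) | ℱ s]) ω ∂μ := by
    have hA_ae : ∀ᵐ ω ∂μ.restrict A,
        (1 - (x : ℝ) ^ (-c₂)) ≤ (μ[S.indicator (fun _ => (1 : ℝ)) | ℱ s]) ω := by
      have h' := ae_restrict_of_ae (s := A) (hdrift s hs)
      filter_upwards [h', ae_restrict_mem hAm] with ω hω hmem
      have hxeq := hAx ω hmem
      have h1x : 1 < X s ω := by omega
      simpa [hxeq] using hω h1x
    calc (1 - (x : ℝ) ^ (-c₂)) * (μ A).toReal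
        = ∫ _ω in A, (1 - (x : ℝ) ^ (-c₂)) ∂μ := by
          rw [setIntegral_const]; rw [smul_eq_mul, measureReal_def]; ring
      _ ≤ _ := by
          refine setIntegral_mono_ae_restrict ?_ integrable_condExp.integrableOn hA_ae
          exact integrableOn_const (measure_ne_top μ A)
  have key : (1 - (x : ℝ) ^ (-c₂)) * (μ A).toReal ≤ (μ (A ∩ S)).toReal := by
    rw [← h1, ← h2]; exact h3
  have hsplit : μ (A ∩ S) + μ (A \ S) = μ A := measure_inter_add_diff A hS
  have ht : (μ (A ∩ S)).toReal + (μ (A \ S)).toReal = (μ A).toReal := by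
    rw [← ENNReal.toReal_add (measure_ne_top _ _) (measure_ne_top _ _), hsplit]
  have hfinal : (μ (A \ S)).toReal ≤ (x : ℝ) ^ (-c₂) * (μ A).toReal := by linarith
  calc μ (A \ S) = ENNReal.ofReal ((μ (A \ S)).toReal) :=
        (ENNReal.ofReal_toReal (measure_ne_top _ _)).symm
    _ ≤ ENNReal.ofReal ((x : ℝ) ^ (-c₂) * (μ A).toReal) :=
        ENNReal.ofReal_le_ofReal hfinal
    _ = ENNReal.ofReal ((x : ℝ) ^ (-c₂)) * ENNReal.ofReal ((μ A).toReal) :=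
        ENNReal.ofReal_mul (Real.rpow_nonneg (by positivity) _)
    _ = _ := by rw [ENNReal.ofReal_toReal (measure_ne_top _ _)]





/-- Success probability of a clean descent of length `n`. -/
def Gf (η ρ : ℝ) (n : ℕ) : ℝ := ∏ j ∈ Finset.range n, (1 - η * ρ ^ j)

variable {η ρ : ℝ}

lemma term_pos (hη : 0 < η) (hη1 : η < 1) (hρ : 0 < ρ) (hρ1 : ρ < 1) (j : ℕ) :
    0 < 1 - η * ρ ^ j := by
  have h1 : ρ ^ j ≤ 1 := pow_le_one₀ hρ.le hρ1.le
  nlinarith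

lemma Gf_pos (hη : 0 < η) (hη1 : η < 1) (hρ : 0 < ρ) (hρ1 : ρ < 1) (n : ℕ) :
    0 < Gf η ρ n :=
  Finset.prod_pos fun j _ => term_pos hη hη1 hρ hρ1 j

lemma Gf_le_one (hη : 0 < η) (hη1 : η < 1) (hρ : 0 < ρ) (hρ1 : ρ < 1) (n : ℕ) :
    Gf η ρ n ≤ 1 := by
  refine Finset.prod_le_one (fun j _ => (term_pos hη hη1 hρ hρ1 j).le) (fun j _ => ?_)
  have : 0 ≤ η * ρ ^ j := by positivity
  linarith

lemma Gf_succ (η ρ : ℝ) (n : ℕ) : Gf η ρ (n + 1) = Gf η ρ n * (1 - η * ρ ^ n) :=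
  Finset.prod_range_succ _ _

lemma one_sub_ge_exp (hη : 0 < η) (hη1 : η < 1) {a : ℝ} (ha : 0 ≤ a) (haη : a ≤ η) :
    Real.exp (-(a / (1 - η))) ≤ 1 - a := by
  have ha1 : a < 1 := lt_of_le_of_lt haη hη1
  have h1a : 0 < 1 - a := by linarith
  have h1η : 0 < 1 - η := by linarith
  have h2 : 1 / (1 - a) ≤ Real.exp (a / (1 - a)) := by
    have := Real.add_one_le_exp (a / (1 - a))
    have heq : a / (1 - a) + 1 = 1 / (1 - a) := by field_simp; ring
    linarith
  have h3 : Real.exp (-(a / (1 - a))) ≤ 1 - a := by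
    rw [Real.exp_neg]
    have hpos : 0 < 1 / (1 - a) := by positivity
    calc (Real.exp (a / (1 - a)))⁻¹ ≤ (1 / (1 - a))⁻¹ := by
          exact inv_anti₀ hpos h2
      _ = 1 - a := by rw [one_div, inv_inv]
  refine le_trans (Real.exp_le_exp.2 ?_) h3
  have hd : a / (1 - a) ≤ a / (1 - η) := by gcongr <;> linarith
  linarith

lemma Gf_ge_aux (hη : 0 < η) (hη1 : η < 1) (hρ : 0 < ρ) (hρ1 : ρ < 1) (n : ℕ) :
    Real.exp (-((∑ j ∈ Finset.range n, η * ρ ^ j) / (1 - η))) ≤ Gf η ρ n := by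
  induction n with
  | zero => simp [Gf]
  | succ n ih =>
    rw [Gf_succ, Finset.sum_range_succ]
    have ha : 0 ≤ η * ρ ^ n := by positivity
    have haη : η * ρ ^ n ≤ η := by
      have h1 : ρ ^ n ≤ 1 := pow_le_one₀ hρ.le hρ1.le
      nlinarith
    have hkey := one_sub_ge_exp hη hη1 ha haη
    have hG0 : (0:ℝ) ≤ Gf η ρ n := (Gf_pos hη hη1 hρ hρ1 n).le
    calc Real.exp (-((∑ j ∈ Finset.range n, η * ρ ^ j + η * ρ ^ n) / (1 - η)))
        = Real.exp (-((∑ j ∈ Finset.range n, η * ρ ^ j) / (1 - η)))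
          * Real.exp (-((η * ρ ^ n) / (1 - η))) := by
          rw [← Real.exp_add]; congr 1; ring
      _ ≤ Gf η ρ n * (1 - η * ρ ^ n) :=
          mul_le_mul ih hkey (Real.exp_pos _).le hG0

lemma Gf_ge (hη : 0 < η) (hη1 : η < 1) (hρ : 0 < ρ) (hρ1 : ρ < 1) (n : ℕ) :
    Real.exp (-(η / ((1 - ρ) * (1 - η)))) ≤ Gf η ρ n := by
  refine le_trans (Real.exp_le_exp.2 ?_) (Gf_ge_aux hη hη1 hρ hρ1 n)
  have h1ρ : 0 < 1 - ρ := by linarith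
  have h1η : 0 < 1 - η := by linarith
  have hsum : ∑ j ∈ Finset.range n, η * ρ ^ j ≤ η / (1 - ρ) := by
    rw [← Finset.mul_sum]
    have hg : ∑ j ∈ Finset.range n, ρ ^ j = (1 - ρ ^ n) / (1 - ρ) := by
      rw [geom_sum_eq (ne_of_lt hρ1)]
      rw [← neg_div_neg_eq]; ring_nf
    have hb : ∑ j ∈ Finset.range n, ρ ^ j ≤ 1 / (1 - ρ) := by
      rw [hg]
      gcongr
      have : (0:ℝ) ≤ ρ ^ n := by positivity
      linarith
    calc η * ∑ j ∈ Finset.range n, ρ ^ j ≤ η * (1 / (1 - ρ)) := by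
          exact mul_le_mul_of_nonneg_left hb hη.le
      _ = η / (1 - ρ) := by ring
  have hfin : (∑ j ∈ Finset.range n, η * ρ ^ j) / (1 - η) ≤ (η / (1 - ρ)) / (1 - η) := by
    gcongr
  rw [div_div] at hfin
  linarith





lemma eps_bound (c₁ c₂ : ℝ) (hc₁ : 0 < c₁) (hc₂ : 0 < c₂) {x n : ℕ}
    (hx : (2 : ℝ) ≤ (x : ℝ) * c₁ ^ n) :
    (x : ℝ) ^ (-c₂) ≤ (2 : ℝ) ^ (-c₂) * (c₁ ^ c₂) ^ n := by
  have hcn : (0 : ℝ) < c₁ ^ n := by positivity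
  set y : ℝ := 2 * (c₁ ^ n)⁻¹ with hy
  have hypos : 0 < y := by positivity
  have hxy : y ≤ (x : ℝ) := by
    rw [hy]
    rw [mul_inv_le_iff₀ hcn]
    linarith
  have h1 : (x : ℝ) ^ (-c₂) ≤ y ^ (-c₂) :=
    Real.rpow_le_rpow_of_nonpos hypos hxy (by linarith)
  have h2 : y ^ (-c₂) = (2 : ℝ) ^ (-c₂) * (c₁ ^ c₂) ^ n := by
    rw [hy, Real.mul_rpow (by norm_num) (by positivity)]
    congr 1
    rw [Real.inv_rpow (by positivity), Real.rpow_neg (by positivity), inv_inv]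
    rw [← Real.rpow_natCast c₁ n, ← Real.rpow_mul hc₁.le, mul_comm,
      Real.rpow_mul hc₁.le, Real.rpow_natCast]
  linarith [h2 ▸ h1]



lemma descent (μ : Measure Ω) [IsProbabilityMeasure μ] (ℱ : Filtration ℕ inst)
    (X : ℕ → Ω → ℕ) (c₁ c₂ : ℝ) (hc₁ : 0 < c₁) (hc₁' : c₁ < 1) (hc₂ : 0 < c₂)
    (hrange : ∀ t : ℕ, 1 ≤ t → ∀ ω : Ω, 1 ≤ X t ω)
    (hadapt : ∀ t : ℕ, 1 ≤ t → Measurable[ℱ t] (X t))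
    (hdrift : ∀ t : ℕ, 1 ≤ t → ∀ᵐ ω ∂μ, 1 < X t ω →
      1 - (X t ω : ℝ) ^ (-c₂) ≤
        (μ[Set.indicator {ω' : Ω | (X (t + 1) ω' : ℝ) ≤ c₁ * (X t ω' : ℝ)}
            (fun _ => (1 : ℝ)) | ℱ t]) ω)
    (n : ℕ) :
    ∀ s, 1 ≤ s → ∀ x : ℕ, (x : ℝ) * c₁ ^ n < 2 →
      ∀ A : Set Ω, MeasurableSet[ℱ s] A → (∀ ω ∈ A, X s ω = x) →
      μ (A ∩ NV X s n) ≤ ENNReal.ofReal (1 - Gf ((2:ℝ)^(-c₂)) (c₁ ^ c₂) n) * μ A := by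
  classical
  have hη : 0 < (2:ℝ)^(-c₂) := Real.rpow_pos_of_pos two_pos _
  have hη1 : (2:ℝ)^(-c₂) < 1 := Real.rpow_lt_one_of_one_lt_of_neg one_lt_two (by linarith)
  have hρ : 0 < c₁ ^ c₂ := Real.rpow_pos_of_pos hc₁ _
  have hρ1 : c₁ ^ c₂ < 1 := Real.rpow_lt_one hc₁.le hc₁' hc₂
  set η := (2:ℝ)^(-c₂) with hηdef
  set ρ := c₁ ^ c₂ with hρdef
  have hempty : ∀ s n : ℕ, 1 ≤ s → ∀ x : ℕ, x ≤ 1 →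
      ∀ A : Set Ω, (∀ ω ∈ A, X s ω = x) → μ (A ∩ NV X s n) = 0 := by
    intro s n hs x hx1 A hAx
    have hsub : A ∩ NV X s n ⊆ ∅ := by
      rintro ω ⟨hωA, hωN⟩
      have h1 := hrange s hs ω
      have h2 := hAx ω hωA
      have h3 : X s ω = 1 := by omega
      exact (mem_NV.1 hωN s le_rfl (Nat.le_add_right _ _)) h3
    exact measure_mono_null hsub measure_empty
  induction n with
  | zero =>
    intro s hs x hxlt A hA hAx
    have hx1 : x ≤ 1 := by
      have h2 : (x:ℝ) < 2 := by simpa using hxlt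
      have : x < 2 := by exact_mod_cast h2
      omega
    rw [hempty s 0 hs x hx1 A hAx]
    exact zero_le
  | succ n ih =>
    intro s hs x hxlt A hA hAx
    rcases le_or_gt x 1 with hx1 | hx1
    · rw [hempty s (n+1) hs x hx1 A hAx]; exact zero_le
    by_cases hcase : (x : ℝ) * c₁ ^ n < 2
    · have h1 : μ (A ∩ NV X s (n+1)) ≤ μ (A ∩ NV X s n) := by
        refine measure_mono (inter_subset_inter_right _ ?_)
        intro ω hω
        rw [mem_NV] at hω ⊢
        exact fun u hsu hun => hω u hsu (by omega)
      refine h1.trans ((ih s hs x hcase A hA hAx).trans ?_)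
      apply mul_le_mul_left
      apply ENNReal.ofReal_le_ofReal
      have hg := Gf_succ η ρ n
      have ht := term_pos hη hη1 hρ hρ1 n
      have hGn := Gf_pos hη hη1 hρ hρ1 n
      have hpn : 0 ≤ η * ρ ^ n := by positivity
      nlinarith [hg, mul_nonneg hGn.le hpn]
    · push_neg at hcase
      set S : Set Ω := {ω | (X (s + 1) ω : ℝ) ≤ c₁ * (X s ω : ℝ)} with hSdef
      have hXs : Measurable (X s) := (hadapt s hs).mono (ℱ.le s) le_rfl
      have hXs1 : Measurable (X (s + 1)) := (hadapt (s+1) (by omega)).mono (ℱ.le (s+1)) le_rfl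
      have hS : MeasurableSet S :=
        measurableSet_le (measurable_from_top.comp hXs1)
          (measurable_const.mul (measurable_from_top.comp hXs))
      have hS' : MeasurableSet[ℱ (s+1)] S := by
        apply measurableSet_le
        · exact measurable_from_top.comp (hadapt (s+1) (by omega))
        · exact measurable_const.mul (measurable_from_top.comp
            ((hadapt s hs).mono (ℱ.mono (Nat.le_succ s)) le_rfl))
      have hAm : MeasurableSet A := ℱ.le s A hA
      have hε : (x : ℝ) ^ (-c₂) ≤ η * ρ ^ n := eps_bound c₁ c₂ hc₁ hc₂ hcase
      have hstep : μ (A \ S) ≤ ENNReal.ofReal (η * ρ ^ n) * μ A := by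
        refine (step_bound μ ℱ X c₁ c₂ hadapt hdrift s x hs (by omega) A hA hAx).trans ?_
        exact mul_le_mul_left (ENNReal.ofReal_le_ofReal hε) _
      set Y : Finset ℕ := (Finset.Ico 2 x).filter (fun y => (y:ℝ) ≤ c₁ * x) with hY
      set Ay : ℕ → Set Ω := fun y => A ∩ S ∩ {ω | X (s+1) ω = y} with hAydef
      have hxpos : (0:ℝ) < x := by exact_mod_cast (by omega : 0 < x)
      have hcover : A ∩ NV X s (n+1) ⊆ (A \ S) ∪ ⋃ y ∈ Y, (Ay y ∩ NV X (s+1) n) := by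
        rintro ω ⟨hωA, hωN⟩
        by_cases hωS : ω ∈ S
        · right
          have hy1 : 1 ≤ X (s+1) ω := hrange (s+1) (by omega) ω
          have hyne : X (s+1) ω ≠ 1 := mem_NV.1 hωN (s+1) (by omega) (by omega)
          have hylex : ((X (s+1) ω : ℕ):ℝ) ≤ c₁ * x := by
            have h := hωS
            rw [hSdef] at h
            simp only [Set.mem_setOf_eq] at h
            rw [hAx ω hωA] at h
            exact h
          have hyx : X (s+1) ω < x := by
            have h2 : ((X (s+1) ω : ℕ):ℝ) < x := lt_of_le_of_lt hylex (by nlinarith)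
            exact_mod_cast h2
          have hmem1 : X (s+1) ω ∈ Y := by
            rw [hY, Finset.mem_filter, Finset.mem_Ico]
            exact ⟨⟨by omega, hyx⟩, hylex⟩
          have hmem2 : ω ∈ Ay (X (s+1) ω) ∩ NV X (s+1) n := by
            refine ⟨⟨⟨hωA, hωS⟩, rfl⟩, ?_⟩
            rw [mem_NV] at hωN ⊢
            intro u hu1 hu2
            exact hωN u (by omega) (by omega)
          exact Set.mem_biUnion hmem1 hmem2
        · left; exact ⟨hωA, hωS⟩
      have hYbound : ∀ y ∈ Y, μ (Ay y ∩ NV X (s+1) n)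
          ≤ ENNReal.ofReal (1 - Gf η ρ n) * μ (Ay y) := by
        intro y hy
        rw [hY, Finset.mem_filter, Finset.mem_Ico] at hy
        obtain ⟨⟨hy2, hyx⟩, hylex⟩ := hy
        have hybound : (y:ℝ) * c₁ ^ n < 2 := by
          calc (y:ℝ) * c₁ ^ n ≤ (c₁ * x) * c₁ ^ n :=
                mul_le_mul_of_nonneg_right hylex (by positivity)
            _ = (x:ℝ) * c₁ ^ (n+1) := by ring
            _ < 2 := hxlt
        refine ih (s+1) (by omega) y hybound (Ay y) ?_ ?_
        · refine (((ℱ.mono (Nat.le_succ s)) A hA).inter hS').inter ?_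
          exact (hadapt (s+1) (by omega)) (measurableSet_singleton y)
        · intro ω hω; exact hω.2
      have hdisj : (↑Y : Set ℕ).PairwiseDisjoint Ay := by
        intro a _ b _ hab
        refine Set.disjoint_left.2 ?_
        intro ω hωa hωb
        exact hab (by rw [← hωa.2, hωb.2])
      have hmeasAy : ∀ y ∈ Y, MeasurableSet (Ay y) := fun y _ =>
        (hAm.inter hS).inter (hXs1 (measurableSet_singleton y))
      have hsum : ∑ y ∈ Y, μ (Ay y) ≤ μ (A ∩ S) := by
        rw [← measure_biUnion_finset hdisj hmeasAy]
        refine measure_mono ?_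
        intro ω hω
        simp only [Set.mem_iUnion] at hω
        obtain ⟨y, _, hω⟩ := hω
        exact hω.1
      set g := Gf η ρ n with hgdef
      have hg0 : 0 ≤ g := (Gf_pos hη hη1 hρ hρ1 n).le
      have hg1 : g ≤ 1 := Gf_le_one hη hη1 hρ hρ1 n
      have hab : ENNReal.ofReal g + ENNReal.ofReal (1 - g) = 1 := by
        rw [← ENNReal.ofReal_add hg0 (by linarith)]
        norm_num
      calc μ (A ∩ NV X s (n+1))
          ≤ μ ((A \ S) ∪ ⋃ y ∈ Y, (Ay y ∩ NV X (s+1) n)) := measure_mono hcover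
        _ ≤ μ (A \ S) + μ (⋃ y ∈ Y, (Ay y ∩ NV X (s+1) n)) := measure_union_le _ _
        _ ≤ μ (A \ S) + ∑ y ∈ Y, μ (Ay y ∩ NV X (s+1) n) :=
            add_le_add_right (measure_biUnion_finset_le _ _) _
        _ ≤ μ (A \ S) + ∑ y ∈ Y, ENNReal.ofReal (1 - g) * μ (Ay y) :=
            add_le_add_right (Finset.sum_le_sum hYbound) _
        _ = μ (A \ S) + ENNReal.ofReal (1 - g) * ∑ y ∈ Y, μ (Ay y) := by
            rw [Finset.mul_sum]
        _ ≤ μ (A \ S) + ENNReal.ofReal (1 - g) * μ (A ∩ S) :=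
            add_le_add_right (mul_le_mul_right hsum _) _
        _ = ENNReal.ofReal g * μ (A \ S)
            + ENNReal.ofReal (1 - g) * (μ (A ∩ S) + μ (A \ S)) := by
            conv_lhs => rw [← one_mul (μ (A \ S)), ← hab]
            ring
        _ = ENNReal.ofReal g * μ (A \ S) + ENNReal.ofReal (1 - g) * μ A := by
            rw [measure_inter_add_diff A hS]
        _ ≤ ENNReal.ofReal g * (ENNReal.ofReal (η * ρ ^ n) * μ A)
            + ENNReal.ofReal (1 - g) * μ A :=
            add_le_add (mul_le_mul_right hstep _) le_rfl
        _ = ENNReal.ofReal (g * (η * ρ ^ n) + (1 - g)) * μ A := by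
            rw [← mul_assoc, ← ENNReal.ofReal_mul hg0, ← add_mul,
              ← ENNReal.ofReal_add (by positivity) (by linarith)]
        _ = ENNReal.ofReal (1 - Gf η ρ (n+1)) * μ A := by
            congr 1
            rw [Gf_succ, hgdef]
            ring

lemma block (μ : Measure Ω) [IsProbabilityMeasure μ] (ℱ : Filtration ℕ inst)
    (X : ℕ → Ω → ℕ) (m : ℕ) (c₁ c₂ : ℝ) (hc₁ : 0 < c₁) (hc₁' : c₁ < 1) (hc₂ : 0 < c₂)
    (hrange : ∀ t : ℕ, 1 ≤ t → ∀ ω : Ω, 1 ≤ X t ω ∧ X t ω ≤ m)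
    (hadapt : ∀ t : ℕ, 1 ≤ t → Measurable[ℱ t] (X t))
    (hdrift : ∀ t : ℕ, 1 ≤ t → ∀ᵐ ω ∂μ, 1 < X t ω →
      1 - (X t ω : ℝ) ^ (-c₂) ≤
        (μ[Set.indicator {ω' : Ω | (X (t + 1) ω' : ℝ) ≤ c₁ * (X t ω' : ℝ)}
            (fun _ => (1 : ℝ)) | ℱ t]) ω)
    (L : ℕ) (hL : ∀ x : ℕ, x ≤ m → (x:ℝ) * c₁ ^ L < 2)
    (δ : ℝ) (hδG : ∀ n, δ ≤ Gf ((2:ℝ)^(-c₂)) (c₁^c₂) n)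
    (N : ℕ) :
    ∀ s, 1 ≤ s → ∀ A : Set Ω, MeasurableSet[ℱ s] A →
      μ (A ∩ NV X s (N * (L+1))) ≤ ENNReal.ofReal (1 - δ) ^ N * μ A := by
  induction N with
  | zero =>
    intro s hs A hA
    rw [pow_zero, one_mul]
    exact measure_mono Set.inter_subset_left
  | succ N ih =>
    intro s hs A hA
    have hAm : MeasurableSet A := ℱ.le s A hA
    have hXs : Measurable (X s) := (hadapt s hs).mono (ℱ.le s) le_rfl
    set d := ENNReal.ofReal (1 - δ) with hd
    set Ax : ℕ → Set Ω := fun x => A ∩ {ω | X s ω = x} with hAxdef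
    have hLle : L ≤ (N+1)*(L+1) :=
      le_trans (Nat.le_succ L) (Nat.le_mul_of_pos_left _ (Nat.succ_pos N))
    have key : ∀ x ∈ Finset.Icc 1 m,
        μ (Ax x ∩ NV X s ((N+1)*(L+1))) ≤ d ^ (N+1) * μ (Ax x) := by
      intro x hx
      rw [Finset.mem_Icc] at hx
      set B : Set Ω := Ax x ∩ NV X s L with hB
      have hBmeas : MeasurableSet[ℱ (s+L+1)] B := by
        refine MeasurableSet.inter (MeasurableSet.inter ?_ ?_) ?_
        · exact (ℱ.mono (by omega : s ≤ s+L+1)) A hA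
        · exact (ℱ.mono (by omega : s ≤ s+L+1)) _
            ((hadapt s hs) (measurableSet_singleton x))
        · refine Finset.measurableSet_biInter _ (fun u hu => ?_)
          rw [Finset.mem_Icc] at hu
          have hu1 : 1 ≤ u := by omega
          exact (ℱ.mono (by omega : u ≤ s+L+1)) _
            (((hadapt u hu1) (measurableSet_singleton 1)).compl)
      have hsub : Ax x ∩ NV X s ((N+1)*(L+1)) ⊆ B ∩ NV X (s+L+1) (N*(L+1)) := by
        rintro ω ⟨hωA, hωN⟩
        rw [mem_NV] at hωN
        refine ⟨⟨hωA, ?_⟩, ?_⟩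
        · rw [mem_NV]; intro u h1 h2
          refine hωN u h1 (le_trans h2 ?_)
          exact Nat.add_le_add_left hLle s
        · rw [mem_NV]; intro u h1 h2
          refine hωN u (le_trans (by omega : s ≤ s + L + 1) h1) ?_
          calc u ≤ s + L + 1 + N * (L+1) := h2
            _ = s + (N+1)*(L+1) := by ring
      have hB1 : μ B ≤ d * μ (Ax x) := by
        rcases eq_or_lt_of_le hx.1 with h1 | h1
        · have hBe : B ⊆ ∅ := by
            rintro ω ⟨⟨hωA, hωx⟩, hωN⟩
            exact (mem_NV.1 hωN s le_rfl (Nat.le_add_right _ _))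
              (hωx.trans h1.symm)
          rw [measure_mono_null hBe measure_empty]
          exact zero_le
        · have hdes := descent μ ℱ X c₁ c₂ hc₁ hc₁' hc₂
            (fun t ht ω => (hrange t ht ω).1) hadapt hdrift L s hs x
            (hL x hx.2) (Ax x)
            (hA.inter ((hadapt s hs) (measurableSet_singleton x)))
            (fun ω hω => hω.2)
          refine hdes.trans (mul_le_mul_left (ENNReal.ofReal_le_ofReal ?_) _)
          have := hδG L
          linarith
      calc μ (Ax x ∩ NV X s ((N+1)*(L+1)))
          ≤ μ (B ∩ NV X (s+L+1) (N*(L+1))) := measure_mono hsub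
        _ ≤ d ^ N * μ B := ih (s+L+1) (by omega) B hBmeas
        _ ≤ d ^ N * (d * μ (Ax x)) := mul_le_mul_right hB1 _
        _ = d ^ (N+1) * μ (Ax x) := by rw [pow_succ, mul_assoc]
    have hcover : A ∩ NV X s ((N+1)*(L+1)) ⊆
        ⋃ x ∈ Finset.Icc 1 m, (Ax x ∩ NV X s ((N+1)*(L+1))) := by
      rintro ω ⟨hωA, hωN⟩
      have hr := hrange s hs ω
      exact Set.mem_biUnion (Finset.mem_Icc.2 hr) ⟨⟨hωA, rfl⟩, hωN⟩
    have hdisj : (↑(Finset.Icc 1 m) : Set ℕ).PairwiseDisjoint Ax := by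
      intro a _ b _ hab
      exact Set.disjoint_left.2 fun ω hωa hωb => hab (by rw [← hωa.2, hωb.2])
    have hmeasAx : ∀ x ∈ Finset.Icc 1 m, MeasurableSet (Ax x) := fun x _ =>
      hAm.inter (hXs (measurableSet_singleton x))
    have hsum : ∑ x ∈ Finset.Icc 1 m, μ (Ax x) = μ A := by
      rw [← measure_biUnion_finset hdisj hmeasAx]
      congr 1
      apply Set.Subset.antisymm
      · exact Set.iUnion₂_subset fun x _ => Set.inter_subset_left
      · intro ω hω
        have hr := hrange s hs ω
        exact Set.mem_biUnion (Finset.mem_Icc.2 hr) ⟨hω, rfl⟩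
    calc μ (A ∩ NV X s ((N+1)*(L+1)))
        ≤ μ (⋃ x ∈ Finset.Icc 1 m, (Ax x ∩ NV X s ((N+1)*(L+1)))) :=
          measure_mono hcover
      _ ≤ ∑ x ∈ Finset.Icc 1 m, μ (Ax x ∩ NV X s ((N+1)*(L+1))) :=
          measure_biUnion_finset_le _ _
      _ ≤ ∑ x ∈ Finset.Icc 1 m, d ^ (N+1) * μ (Ax x) := Finset.sum_le_sum key
      _ = d ^ (N+1) * ∑ x ∈ Finset.Icc 1 m, μ (Ax x) := by rw [Finset.mul_sum]
      _ = d ^ (N+1) * μ A := by rw [hsum]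

end RVaux

open MeasureTheory
open scoped MeasureTheory

/-- **Repeated visits to the bottom state.** Let `m ≥ 2` and let
`(X_t)_{t≥1}` be a process with values in `{1, …, m}`, adapted to a filtration
`(ℱ_t)`, such that for constants `c₁, c₂ ∈ (0,1)` and every `t ≥ 1`, almost
surely `Pr[X_{t+1} ≤ c₁·X_t | ℱ_t] ≥ 1 − X_t^(−c₂)` on the event `{X_t > 1}`
(after each visit to the state `1` the process may move arbitrarily).  Then
there is a constant `K` (depending only on `c₁, c₂`) such that for every
positive integer `k` and all sufficiently large `m`, with probability at
least `1 − k·m^(−4)` the process visits the state `1` at least `k` times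
within the first `K·k·(log m)²` steps. -/
theorem repeated_visits_bound (c₁ c₂ : ℝ) (hc₁ : 0 < c₁) (hc₁' : c₁ < 1)
    (hc₂ : 0 < c₂) (hc₂' : c₂ < 1) :
    ∃ K : ℝ, 0 < K ∧ ∃ m₀ : ℕ, ∀ k : ℕ, 1 ≤ k → ∀ m : ℕ, m₀ ≤ m →
      ∀ {Ω : Type} [inst : MeasurableSpace Ω] (μ : Measure Ω)
        [IsProbabilityMeasure μ] (ℱ : Filtration ℕ inst) (X : ℕ → Ω → ℕ),
        (∀ t : ℕ, 1 ≤ t → ∀ ω : Ω, 1 ≤ X t ω ∧ X t ω ≤ m) →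
        (∀ t : ℕ, 1 ≤ t → Measurable[ℱ t] (X t)) →
        (∀ t : ℕ, 1 ≤ t → ∀ᵐ ω ∂μ, 1 < X t ω →
          1 - (X t ω : ℝ) ^ (-c₂) ≤
            (μ[Set.indicator {ω' : Ω | (X (t + 1) ω' : ℝ) ≤ c₁ * (X t ω' : ℝ)}
                (fun _ => (1 : ℝ)) | ℱ t]) ω) →
        ENNReal.ofReal (1 - (k : ℝ) * (m : ℝ) ^ (-(4 : ℝ))) ≤
          μ {ω : Ω | k ≤
              ((Finset.Icc 1 ⌊K * (k : ℝ) * Real.log m ^ 2⌋₊).filter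
                (fun t => X t ω = 1)).card} := by
  classical
  have hη : 0 < (2:ℝ)^(-c₂) := Real.rpow_pos_of_pos two_pos _
  have hη1 : (2:ℝ)^(-c₂) < 1 :=
    Real.rpow_lt_one_of_one_lt_of_neg one_lt_two (by linarith)
  have hρ : 0 < c₁ ^ c₂ := Real.rpow_pos_of_pos hc₁ _
  have hρ1 : c₁ ^ c₂ < 1 := Real.rpow_lt_one hc₁.le hc₁' hc₂
  set η := (2:ℝ)^(-c₂) with hηdef
  set ρ := c₁ ^ c₂ with hρdef
  set δ : ℝ := Real.exp (-(η / ((1 - ρ) * (1 - η)))) with hδdef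
  have hδ0 : 0 < δ := Real.exp_pos _
  have hδ1 : δ < 1 := by
    rw [hδdef, Real.exp_lt_one_iff]
    have : 0 < η / ((1 - ρ) * (1 - η)) := by
      apply div_pos hη
      apply mul_pos <;> linarith
    linarith
  have h1δ : 0 < 1 - δ := by linarith
  set β : ℝ := -Real.log (1 - δ) with hβdef
  have hβ : 0 < β := by
    have : Real.log (1 - δ) < 0 := Real.log_neg h1δ (by linarith)
    rw [hβdef]; linarith
  set γ : ℝ := -Real.log c₁ with hγdef
  have hγ : 0 < γ := by
    have : Real.log c₁ < 0 := Real.log_neg hc₁ hc₁'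
    rw [hγdef]; linarith
  set K : ℝ := (4/β + 1) * (1/γ + 2) + 1 with hK
  have hKpos : 0 < K := by positivity
  refine ⟨K, hKpos, 3, ?_⟩
  intro k hk m hm Ω inst μ instP ℱ X hrange hadapt hdrift
  set ℓ : ℝ := Real.log m with hℓ
  have hm0 : (0:ℝ) < m := by exact_mod_cast (by omega : 0 < m)
  have hℓ1 : 1 ≤ ℓ := by
    rw [hℓ, Real.le_log_iff_exp_le hm0]
    calc Real.exp 1 ≤ 2.7182818286 := Real.exp_one_lt_d9.le
      _ ≤ 3 := by norm_num
      _ ≤ (m:ℝ) := by exact_mod_cast hm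
  set L : ℕ := ⌈ℓ / γ⌉₊ with hLdef
  set N : ℕ := ⌈4 * ℓ / β⌉₊ with hNdef
  set D : ℕ := N * (L + 1) with hD
  have hc₁L : c₁ ^ L ≤ (m:ℝ)⁻¹ := by
    have h1 : c₁ ^ L = Real.exp ((L:ℝ) * Real.log c₁) := by
      rw [Real.exp_nat_mul, Real.exp_log hc₁]
    have hceil : ℓ / γ ≤ (L:ℝ) := Nat.le_ceil _
    have hLγ : ℓ ≤ (L:ℝ) * γ := by
      rw [div_le_iff₀ hγ] at hceil; linarith
    have h2 : (L:ℝ) * Real.log c₁ ≤ -ℓ := by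
      have hlog : Real.log c₁ = -γ := by rw [hγdef]; ring
      rw [hlog]
      have : (L:ℝ) * -γ = -((L:ℝ) * γ) := by ring
      linarith
    calc c₁ ^ L = Real.exp ((L:ℝ) * Real.log c₁) := h1
      _ ≤ Real.exp (-ℓ) := Real.exp_le_exp.2 h2
      _ = (m:ℝ)⁻¹ := by rw [hℓ, Real.exp_neg, Real.exp_log hm0]
  have hLbound : ∀ x : ℕ, x ≤ m → (x:ℝ) * c₁ ^ L < 2 := by
    intro x hx
    have hx' : (x:ℝ) ≤ m := by exact_mod_cast hx
    have hcp : (0:ℝ) < c₁ ^ L := by positivity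
    calc (x:ℝ) * c₁ ^ L ≤ (m:ℝ) * (m:ℝ)⁻¹ :=
          mul_le_mul hx' hc₁L hcp.le hm0.le
      _ = 1 := mul_inv_cancel₀ (ne_of_gt hm0)
      _ < 2 := one_lt_two
  have hδG : ∀ n, δ ≤ RVaux.Gf η ρ n := fun n => RVaux.Gf_ge hη hη1 hρ hρ1 n
  have hdN : ((1:ℝ) - δ) ^ N ≤ (m:ℝ) ^ (-(4:ℝ)) := by
    have h1 : ((1:ℝ) - δ) ^ N = Real.exp ((N:ℝ) * Real.log (1 - δ)) := by
      rw [Real.exp_nat_mul, Real.exp_log h1δ]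
    have hceil : 4 * ℓ / β ≤ (N:ℝ) := Nat.le_ceil _
    have hNβ : 4 * ℓ ≤ (N:ℝ) * β := by
      rw [div_le_iff₀ hβ] at hceil; linarith
    have h2 : (N:ℝ) * Real.log (1 - δ) ≤ -(4 * ℓ) := by
      have hlog : Real.log (1 - δ) = -β := by rw [hβdef]; ring
      rw [hlog]
      have : (N:ℝ) * -β = -((N:ℝ) * β) := by ring
      linarith
    have h3 : (m:ℝ) ^ (-(4:ℝ)) = Real.exp (-(4 * ℓ)) := by
      rw [Real.rpow_def_of_pos hm0, hℓ]; ring_nf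
    rw [h1, h3]
    exact Real.exp_le_exp.2 h2
  set T : ℕ := ⌊K * (k:ℝ) * ℓ ^ 2⌋₊ with hT
  have hkT : k * (D + 1) ≤ T := by
    apply Nat.le_floor
    push_cast
    have hN4 : (N:ℝ) ≤ (4/β + 1) * ℓ := by
      have h1 : (N:ℝ) < 4 * ℓ / β + 1 := Nat.ceil_lt_add_one (by positivity)
      have h2 : (4/β + 1) * ℓ = 4 * ℓ / β + ℓ := by ring
      linarith
    have hL2 : (L:ℝ) + 1 ≤ (1/γ + 2) * ℓ := by
      have h1 : (L:ℝ) < ℓ / γ + 1 := Nat.ceil_lt_add_one (by positivity)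
      have h2 : (1/γ + 2) * ℓ = ℓ / γ + 2 * ℓ := by ring
      linarith
    have hD1 : ((D:ℝ) + 1) ≤ K * ℓ ^ 2 := by
      have hDcast : (D:ℝ) = (N:ℝ) * ((L:ℝ) + 1) := by rw [hD]; push_cast; ring
      have h2 : (N:ℝ) * ((L:ℝ)+1) ≤ ((4/β+1) * ℓ) * ((1/γ+2) * ℓ) := by
        apply mul_le_mul hN4 hL2 (by positivity) (by positivity)
      have hℓsq : 1 ≤ ℓ ^ 2 := by nlinarith [sq_nonneg (ℓ - 1)]
      rw [hDcast, hK]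
      have hexp : ((4/β+1) * ℓ) * ((1/γ+2) * ℓ) + 1 * ℓ^2 = ((4/β + 1) * (1/γ + 2) + 1) * ℓ ^ 2 := by ring
      linarith
    calc (k:ℝ) * ((D:ℝ) + 1) ≤ (k:ℝ) * (K * ℓ^2) :=
          mul_le_mul_of_nonneg_left hD1 (Nat.cast_nonneg k)
      _ = K * k * ℓ^2 := by ring
  have hblock : ∀ j, μ (RVaux.NV X (1 + j * (D+1)) D)
      ≤ ENNReal.ofReal ((m:ℝ)^(-(4:ℝ))) := by
    intro j
    have h := RVaux.block μ ℱ X m c₁ c₂ hc₁ hc₁' hc₂ hrange hadapt hdrift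
      L hLbound δ hδG N (1 + j*(D+1)) (Nat.le_add_right 1 _)
      Set.univ MeasurableSet.univ
    rw [Set.univ_inter, measure_univ, mul_one, ← hD] at h
    refine h.trans ?_
    calc ENNReal.ofReal (1-δ) ^ N = ENNReal.ofReal ((1-δ)^N) :=
          (ENNReal.ofReal_pow (by linarith) N).symm
      _ ≤ ENNReal.ofReal ((m:ℝ)^(-(4:ℝ))) := ENNReal.ofReal_le_ofReal hdN
  set good : Set Ω := {ω : Ω | k ≤
      ((Finset.Icc 1 T).filter (fun t => X t ω = 1)).card} with hgood
  have hcover : ∀ ω, ω ∉ (⋃ j ∈ Finset.range k, RVaux.NV X (1 + j*(D+1)) D) →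
      ω ∈ good := by
    intro ω hω
    have hj : ∀ j : Fin k, ∃ t, (1 + (j:ℕ)*(D+1) ≤ t ∧ t ≤ 1 + (j:ℕ)*(D+1) + D)
        ∧ X t ω = 1 := by
      intro j
      have h1 : ω ∉ RVaux.NV X (1 + (j:ℕ)*(D+1)) D := fun hmem =>
        hω (Set.mem_biUnion (Finset.mem_range.2 j.2) hmem)
      rw [RVaux.mem_NV] at h1
      push_neg at h1
      obtain ⟨u, hu1, hu2, hu3⟩ := h1
      exact ⟨u, ⟨hu1, hu2⟩, by simpa using hu3⟩
    choose f hf1 hf2 using hj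
    have hmono : ∀ a b : Fin k, a < b → f a < f b := by
      intro a b hab
      have h1 : f a ≤ 1 + (a:ℕ)*(D+1) + D := (hf1 a).2
      have h2 : 1 + (b:ℕ)*(D+1) ≤ f b := (hf1 b).1
      have hab' : (a:ℕ) + 1 ≤ (b:ℕ) := hab
      have h3 : (a:ℕ)*(D+1) + (D+1) ≤ (b:ℕ)*(D+1) := by
        calc (a:ℕ)*(D+1) + (D+1) = ((a:ℕ)+1)*(D+1) := by ring
          _ ≤ (b:ℕ)*(D+1) := Nat.mul_le_mul_right _ hab'
      calc f a ≤ 1 + (a:ℕ)*(D+1) + D := h1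
        _ < 1 + ((a:ℕ)*(D+1) + (D+1)) := by
            have he : 1 + ((a:ℕ)*(D+1) + (D+1)) = (1 + (a:ℕ)*(D+1) + D) + 1 := by
              ring
            rw [he]; exact Nat.lt_succ_self _
        _ ≤ 1 + (b:ℕ)*(D+1) := Nat.add_le_add_left h3 1
        _ ≤ f b := h2
    have hinj : Set.InjOn f ↑(Finset.univ : Finset (Fin k)) := by
      intro a _ b _ hab
      by_contra hne
      rcases Ne.lt_or_gt hne with h | h
      · exact (hmono a b h).ne hab
      · exact (hmono b a h).ne' hab
    have hmem : ∀ j ∈ (Finset.univ : Finset (Fin k)),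
        f j ∈ (Finset.Icc 1 T).filter (fun t => X t ω = 1) := by
      intro j _
      rw [Finset.mem_filter, Finset.mem_Icc]
      refine ⟨⟨?_, ?_⟩, hf2 j⟩
      · exact le_trans (Nat.le_add_right 1 _) (hf1 j).1
      · have h1 : f j ≤ 1 + (j:ℕ)*(D+1) + D := (hf1 j).2
        have h2 : 1 + (j:ℕ)*(D+1) + D = ((j:ℕ)+1)*(D+1) := by ring
        have h3 : ((j:ℕ)+1)*(D+1) ≤ k * (D+1) := Nat.mul_le_mul_right _ j.2
        calc f j ≤ ((j:ℕ)+1)*(D+1) := by rw [← h2]; exact h1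
          _ ≤ k * (D+1) := h3
          _ ≤ T := hkT
    have hcard : k ≤ ((Finset.Icc 1 T).filter (fun t => X t ω = 1)).card := by
      calc k = (Finset.univ : Finset (Fin k)).card := by simp
        _ ≤ _ := Finset.card_le_card_of_injOn f hmem hinj
    exact hcard
  have hsubset : goodᶜ ⊆ ⋃ j ∈ Finset.range k, RVaux.NV X (1+j*(D+1)) D := by
    intro ω hω
    by_contra hnot
    exact hω (hcover ω hnot)
  have hbad : μ goodᶜ ≤ ENNReal.ofReal ((k:ℝ) * (m:ℝ)^(-(4:ℝ))) := by
    calc μ goodᶜ ≤ μ (⋃ j ∈ Finset.range k, RVaux.NV X (1+j*(D+1)) D) :=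
          measure_mono hsubset
      _ ≤ ∑ j ∈ Finset.range k, μ (RVaux.NV X (1+j*(D+1)) D) :=
          measure_biUnion_finset_le _ _
      _ ≤ ∑ j ∈ Finset.range k, ENNReal.ofReal ((m:ℝ)^(-(4:ℝ))) :=
          Finset.sum_le_sum (fun j _ => hblock j)
      _ = (k : ENNReal) * ENNReal.ofReal ((m:ℝ)^(-(4:ℝ))) := by
          rw [Finset.sum_const, Finset.card_range, nsmul_eq_mul]
      _ = ENNReal.ofReal ((k:ℝ) * (m:ℝ)^(-(4:ℝ))) := by
          rw [ENNReal.ofReal_mul (Nat.cast_nonneg k), ENNReal.ofReal_natCast]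
  have hunion : (1:ENNReal) ≤ μ good + μ goodᶜ := by
    rw [← measure_univ (μ := μ)]
    refine le_trans (measure_mono ?_) (measure_union_le _ _)
    intro ω _
    by_cases h : ω ∈ good
    · exact Or.inl h
    · exact Or.inr h
  calc ENNReal.ofReal (1 - (k:ℝ) * (m:ℝ)^(-(4:ℝ)))
      = ENNReal.ofReal 1 - ENNReal.ofReal ((k:ℝ)*(m:ℝ)^(-(4:ℝ))) :=
        ENNReal.ofReal_sub _ (by positivity)
    _ = 1 - ENNReal.ofReal ((k:ℝ)*(m:ℝ)^(-(4:ℝ))) := by rw [ENNReal.ofReal_one]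
    _ ≤ 1 - μ goodᶜ := tsub_le_tsub_left hbad 1
    _ ≤ μ good := by
        rw [tsub_le_iff_right]
        exact hunion
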